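/- Let U be a nonempty finite set, let F = F(U ⊔ {v}) be the free group with free basis U ⊔ {v}, and let u ∈ ⟨U⟩. If an element w ∈ F lies in the subgroup ⟨U ∪ {v⁻¹uv}⟩ generated by the basis elements from U together with v⁻¹uv, then the stabilizer Stab(w) of w in Aut(F) is not a cyclic group. -/

import Mathlib

namespace Stmt2Aux

open FreeGroup List

variable {α : Type*} [DecidableEq α]

/-- the no-cancellation relation on letters -/
def Rl (p q : α × Bool) : Prop := ¬(p.1 = q.1 ∧ p.2 = !q.2)

instance : DecidableRel (Rl (α := α)) := fun _ _ => by unfold Rl; infer_instance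

theorem reduce_eq_self_of_chain' {L : List (α × Bool)} (h : List.Chain' Rl L) :
    reduce L = L := by
  induction L with
  | nil => rfl
  | cons x M ih =>
    rw [FreeGroup.reduce.cons, ih h.tail]
    cases M with
    | nil => rfl
    | cons q t =>
      have hR : Rl x q := (List.isChain_cons_cons.mp h).1
      simp only [Rl] at hR
      simp [if_neg hR]

theorem exists_bad {L : List (α × Bool)} (h : ¬ List.Chain' Rl L) :
    ∃ (P Q : List (α × Bool)) (x : α) (b : Bool), L = P ++ (x, b) :: (x, !b) :: Q := by
  induction L with
  | nil => exact absurd List.isChain_nil h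
  | cons p M ih =>
    cases M with
    | nil => exact absurd (List.isChain_singleton p) h
    | cons q t =>
      rw [show List.Chain' Rl (p :: q :: t) ↔ _ from List.isChain_cons_cons] at h
      by_cases hpq : p.1 = q.1 ∧ p.2 = !q.2
      · refine ⟨[], t, p.1, p.2, ?_⟩
        obtain ⟨h1, h2⟩ := hpq
        simp only [List.nil_append]
        have hq : q = (p.1, !p.2) := by
          cases q; cases p; simp_all
        rw [hq]
      · have hM : ¬ List.Chain' Rl (q :: t) := fun hc => h ⟨hpq, hc⟩
        obtain ⟨P, Q, x, b, hPQ⟩ := ih hM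
        exact ⟨p :: P, Q, x, b, by rw [hPQ]; rfl⟩

theorem chain'_toWord (x : FreeGroup α) : List.Chain' Rl x.toWord := by
  by_contra h
  obtain ⟨P, Q, a, b, hd⟩ := exists_bad h
  have h2 := FreeGroup.reduce_toWord x
  rw [hd] at h2
  exact FreeGroup.reduce.not h2


def repList (L : List (α × Bool)) : ℕ → List (α × Bool)
  | 0 => []
  | n + 1 => L ++ repList L n

omit [DecidableEq α] in
theorem mk_repList (L : List (α × Bool)) (n : ℕ) : mk (repList L n) = (mk L) ^ n := by
  induction n with
  | zero => simp [repList, FreeGroup.one_eq_mk]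
  | succ n ih => rw [repList, ← FreeGroup.mul_mk, ih, pow_succ']

omit [DecidableEq α] in
theorem head?_repList (L : List (α × Bool)) (n : ℕ) (hL : L ≠ []) (hn : n ≠ 0) :
    (repList L n).head? = L.head? := by
  cases n with
  | zero => exact absurd rfl hn
  | succ n =>
    rw [repList]
    obtain ⟨a, t, rfl⟩ := List.exists_cons_of_ne_nil hL
    rfl

theorem chain'_repList {L : List (α × Bool)} (h : List.Chain' Rl L) (hL : L ≠ [])
    (hcyc : ∀ p ∈ L.getLast?, ∀ q ∈ L.head?, Rl p q) (n : ℕ) :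
    List.Chain' Rl (repList L n) := by
  induction n with
  | zero => exact List.isChain_nil
  | succ n ih =>
    rw [repList]
    refine List.isChain_append.mpr ⟨h, ih, ?_⟩
    intro p hp q hq
    rcases Nat.eq_zero_or_pos n with rfl | hn
    · simp [repList] at hq
    · rw [head?_repList L n hL (by omega)] at hq
      exact hcyc p hp q hq

omit [DecidableEq α] in
theorem repList_ne_nil {L : List (α × Bool)} (hL : L ≠ []) {n : ℕ} (hn : n ≠ 0) :
    repList L n ≠ [] := by
  cases n with
  | zero => exact absurd rfl hn
  | succ n => rw [repList]; simp [hL]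

theorem pow_ne_one_aux (n : ℕ) (hn : n ≠ 0) :
    ∀ (k : ℕ) (x : FreeGroup α), x.toWord.length ≤ k → x ≠ 1 → x ^ n ≠ 1 := by
  intro k
  induction k with
  | zero =>
    intro x hlen hx
    exact absurd (FreeGroup.toWord_eq_nil_iff.mp (List.eq_nil_of_length_eq_zero (by omega))) hx
  | succ k ih =>
    intro x hlen hx
    set L := x.toWord with hLdef
    have hchain : List.Chain' Rl L := chain'_toWord x
    have hLne : L ≠ [] := fun h => hx (FreeGroup.toWord_eq_nil_iff.mp h)
    have hxmk : x = mk L := (FreeGroup.mk_toWord).symm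
    by_cases hcyc : ∀ p ∈ L.getLast?, ∀ q ∈ L.head?, Rl p q
    · -- cyclically reduced case
      have hch : List.Chain' Rl (repList L n) := chain'_repList hchain hLne hcyc n
      intro hone
      have h2 : (x ^ n).toWord = repList L n := by
        rw [hxmk, ← mk_repList, FreeGroup.toWord_mk, reduce_eq_self_of_chain' hch]
      rw [hone, FreeGroup.toWord_one] at h2
      exact repList_ne_nil hLne hn h2.symm
    · -- not cyclically reduced : peel a conjugation
      push_neg at hcyc
      obtain ⟨p, hp, q, hq, hpq⟩ := hcyc
      simp only [Rl, not_not] at hpq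
      obtain ⟨hpq1, hpq2⟩ := hpq
      obtain ⟨q', M, hLM⟩ := List.exists_cons_of_ne_nil hLne
      have hq' : q' = q := by
        rw [hLM, List.head?_cons] at hq
        exact (Option.some_inj.mp hq)
      subst hq'
      have hMne : M ≠ [] := by
        rintro rfl
        rw [hLM, List.getLast?_singleton] at hp
        have : q' = p := Option.some_inj.mp hp
        rw [this] at hpq2
        simp at hpq2
      -- M = M' ++ [p]
      have hp' : p ∈ M.getLast? := by
        rw [hLM] at hp
        rwa [show q' :: M = [q'] ++ M from rfl,
          List.getLast?_append_of_ne_nil _ hMne] at hp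
      have hMsplit : M = M.dropLast ++ [p] := (List.dropLast_append_getLast? p hp').symm
      set M' := M.dropLast with hM'def
      have hLsplit : L = q' :: (M' ++ [p]) := by rw [hLM]; exact congrArg (q' :: ·) hMsplit
      -- chain facts
      have hchainM : List.Chain' Rl (M' ++ [p]) := by
        have := hchain
        rw [hLsplit] at this
        exact this.tail
      have hchainM' : List.Chain' Rl M' := hchainM.prefix ⟨[p], rfl⟩
      -- M' nonempty
      have hM'ne : M' ≠ [] := by
        rintro hM'
        rw [hM'] at hLsplit
        simp only [List.nil_append] at hLsplit
        rw [hLsplit] at hchain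
        have hR : Rl q' p := (List.isChain_cons_cons.mp hchain).1
        exact hR ⟨hpq1.symm, by rw [hpq2]; simp⟩
      -- y
      set y : FreeGroup α := mk M' with hydef
      have hyword : y.toWord = M' := by
        rw [hydef, FreeGroup.toWord_mk, reduce_eq_self_of_chain' hchainM']
      have hyne : y ≠ 1 := by
        intro h1
        rw [h1, FreeGroup.toWord_one] at hyword
        exact hM'ne hyword.symm
      have hylen : y.toWord.length ≤ k := by
        rw [hyword]
        have : L.length = M'.length + 2 := by
          rw [hLsplit]; simp
        omega
      have hyn := ih y hylen hyne
      -- x = g * y * g⁻¹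
      have hpval : p = (q'.1, !q'.2) := Prod.ext hpq1 hpq2
      have hinv : mk [p] = (mk [q'])⁻¹ := by
        rw [FreeGroup.inv_mk, hpval]
        simp [FreeGroup.invRev]
      have hxconj : x = mk [q'] * y * (mk [q'])⁻¹ := by
        rw [hxmk, hLsplit, ← hinv, hydef]
        rw [FreeGroup.mul_mk, FreeGroup.mul_mk]
        rfl
      intro hone
      rw [hxconj, conj_pow] at hone
      have h3 : y ^ n = 1 := by
        have h2 : y ^ n = (mk [q'])⁻¹ * (mk [q'] * y ^ n * (mk [q'])⁻¹) * mk [q'] := by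
          group
        rw [hone] at h2
        simpa [← FreeGroup.mul_mk, ← FreeGroup.inv_mk] using h2
      exact hyn h3

theorem freeGroup_zpow_eq_one {x : FreeGroup α} (hx : x ≠ 1) {b : ℤ} (h : x ^ b = 1) :
    b = 0 := by
  rcases b with n | n
  · rcases Nat.eq_zero_or_pos n with rfl | hn
    · rfl
    · exfalso
      rw [Int.ofNat_eq_coe, zpow_natCast] at h
      exact pow_ne_one_aux n (by omega) x.toWord.length x le_rfl hx h
  · exfalso
    rw [zpow_negSucc, inv_eq_one] at h
    exact pow_ne_one_aux (n+1) (by omega) x.toWord.length x le_rfl hx h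


theorem of_eq_mk (a : α) : of a = mk [(a, true)] := rfl

omit [DecidableEq α] in
theorem cons_eq_append_singleton {a : α × Bool} :
    ∀ {L : List (α × Bool)}, a :: L = L ++ [a] → L = List.replicate L.length a := by
  intro L
  induction L with
  | nil => intro _; rfl
  | cons b M ih =>
    intro h
    rw [List.cons_append] at h
    injection h with hab htail
    subst hab
    rw [List.length_cons, List.replicate_succ]
    exact congrArg (a :: ·) (ih htail)

theorem head_fst_eq_of_commute {x : α} {w : FreeGroup α} (hw : w ≠ 1)
    (hcom : w * of x = of x * w) {p : α × Bool} {M : List (α × Bool)}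
    (hLM : w.toWord = p :: M) : p.1 = x := by
  set L := w.toWord with hLdef
  have hchain : List.Chain' Rl L := chain'_toWord w
  have hred : reduce L = L := FreeGroup.reduce_toWord w
  have hLne : L ≠ [] := by rw [hLM]; simp
  have hwmk : w = mk L := (FreeGroup.mk_toWord).symm
  by_cases hhead : p.1 = x
  · exact hhead
  exfalso
  -- left side word
  have hL1 : (of x * w).toWord = (x, true) :: L := by
    rw [of_eq_mk, hwmk, FreeGroup.mul_mk, List.singleton_append, FreeGroup.toWord_mk,
      FreeGroup.reduce.cons, hred, hLM]
    dsimp only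
    rw [if_neg (show ¬(x = p.1 ∧ true = !p.2) by rintro ⟨h1, _⟩; exact hhead h1.symm)]
  by_cases hlast : L.getLast hLne = (x, false)
  · -- cancellation at the end: length contradiction
    have hsplit : L = L.dropLast ++ [(x, false)] := by
      conv_lhs => rw [← List.dropLast_append_getLast hLne]
      rw [hlast]
    have hmul : w * of x = mk L.dropLast := by
      rw [hwmk, of_eq_mk]
      conv_lhs => rw [hsplit]
      rw [FreeGroup.mul_mk, List.append_assoc]
      have : mk (L.dropLast ++ ([(x, false)] ++ [(x, true)])) =
          mk L.dropLast * (mk [(x, false)] * mk [(x, true)]) := by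
        rw [FreeGroup.mul_mk, FreeGroup.mul_mk]
      rw [this]
      have h1 : mk [(x, false)] = (mk [(x, true)])⁻¹ := by
        rw [FreeGroup.inv_mk]
        simp [FreeGroup.invRev]
      rw [h1, inv_mul_cancel, mul_one]
    have hR : (w * of x).toWord = L.dropLast := by
      rw [hmul, FreeGroup.toWord_mk,
        reduce_eq_self_of_chain' (hchain.prefix (List.dropLast_prefix L))]
    have heq : (x, true) :: L = L.dropLast := by rw [← hL1, ← hR, hcom]
    have := congrArg List.length heq
    rw [List.length_cons, List.length_dropLast] at this
    have hpos : 0 < L.length := List.length_pos_of_ne_nil hLne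
    omega
  · -- no cancellation: w is a replicate
    have hch2 : List.Chain' Rl (L ++ [(x, true)]) := by
      refine List.isChain_append.mpr ⟨hchain, List.isChain_singleton _, ?_⟩
      intro p' hp' q' hq'
      simp only [List.head?_cons, Option.mem_def, Option.some_inj] at hq'
      rw [List.getLast?_eq_getLast_of_ne_nil hLne] at hp'
      have hp'' : p' = L.getLast hLne := (Option.some_inj.mp hp').symm
      rintro ⟨h1, h2⟩
      rw [← hq'] at h1 h2
      simp only at h1 h2
      apply hlast
      rw [← hp'']
      exact Prod.ext h1 (by simpa using h2)
    have hR : (w * of x).toWord = L ++ [(x, true)] := by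
      rw [hwmk, of_eq_mk, FreeGroup.mul_mk, FreeGroup.toWord_mk,
        reduce_eq_self_of_chain' hch2]
    have heq : (x, true) :: L = L ++ [(x, true)] := by rw [← hL1, ← hR, hcom]
    have hrep := cons_eq_append_singleton heq
    rw [hLM] at hrep
    have : p = (x, true) := by
      have := congrArg (fun l => l.head?) hrep
      simpa [List.replicate_succ] using this
    exact hhead (by rw [this])

theorem eq_one_of_commute_two {x₁ x₂ : α} (hx : x₁ ≠ x₂) {w : FreeGroup α}
    (h₁ : w * of x₁ = of x₁ * w) (h₂ : w * of x₂ = of x₂ * w) : w = 1 := by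
  by_contra hw
  have hLne : w.toWord ≠ [] := fun h => hw (FreeGroup.toWord_eq_nil_iff.mp h)
  obtain ⟨p, M, hLM⟩ := List.exists_cons_of_ne_nil hLne
  have e1 := head_fst_eq_of_commute hw h₁ hLM
  have e2 := head_fst_eq_of_commute hw h₂ hLM
  exact hx (e1 ▸ e2 ▸ rfl)


section Main

variable {U : Type}

/-- the distinguished letter v -/
def vv : FreeGroup (U ⊕ Unit) := FreeGroup.of (Sum.inr ())

/-- the subgroup generated by the `U`-letters -/
def KK (U : Type) : Subgroup (FreeGroup (U ⊕ Unit)) :=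
  Subgroup.closure (Set.range fun y : U => FreeGroup.of (Sum.inl y))

theorem hom_fix_K (φ : FreeGroup (U ⊕ Unit) →* FreeGroup (U ⊕ Unit))
    (hφ : ∀ y : U, φ (FreeGroup.of (Sum.inl y)) = FreeGroup.of (Sum.inl y)) :
    ∀ a ∈ KK U, φ a = a := by
  intro a ha
  induction ha using Subgroup.closure_induction with
  | mem x hx => obtain ⟨y, rfl⟩ := hx; exact hφ y
  | one => exact map_one φ
  | mul x y hx hy ihx ihy => rw [_root_.map_mul, ihx, ihy]
  | inv x hx ihx => rw [_root_.map_inv, ihx]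

/-- substitution map sending v to c * v -/
def fL (c : FreeGroup (U ⊕ Unit)) : (U ⊕ Unit) → FreeGroup (U ⊕ Unit)
  | Sum.inl y => FreeGroup.of (Sum.inl y)
  | Sum.inr _ => c * vv

/-- substitution map sending v to v * c -/
def fR (c : FreeGroup (U ⊕ Unit)) : (U ⊕ Unit) → FreeGroup (U ⊕ Unit)
  | Sum.inl y => FreeGroup.of (Sum.inl y)
  | Sum.inr _ => vv * c

theorem lift_fL_inl (c : FreeGroup (U ⊕ Unit)) (y : U) :
    FreeGroup.lift (fL c) (FreeGroup.of (Sum.inl y)) = FreeGroup.of (Sum.inl y) := by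
  rw [FreeGroup.lift_apply_of]; rfl

theorem lift_fR_inl (c : FreeGroup (U ⊕ Unit)) (y : U) :
    FreeGroup.lift (fR c) (FreeGroup.of (Sum.inl y)) = FreeGroup.of (Sum.inl y) := by
  rw [FreeGroup.lift_apply_of]; rfl

theorem compL {c : FreeGroup (U ⊕ Unit)} (hc : c ∈ KK U) :
    (FreeGroup.lift (fL c⁻¹)).comp (FreeGroup.lift (fL c)) = MonoidHom.id _ := by
  apply FreeGroup.ext_hom
  intro x
  cases x with
  | inl y =>
    simp only [MonoidHom.comp_apply, MonoidHom.id_apply]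
    rw [lift_fL_inl]
    exact lift_fL_inl c⁻¹ y
  | inr _ =>
    simp only [MonoidHom.comp_apply, MonoidHom.id_apply]
    rw [show FreeGroup.of (Sum.inr () : U ⊕ Unit) = vv from rfl]
    rw [show FreeGroup.lift (fL c) vv = c * vv from by rw [vv, FreeGroup.lift_apply_of]; rfl]
    rw [_root_.map_mul]
    rw [show FreeGroup.lift (fL c⁻¹) vv = c⁻¹ * vv from by rw [vv, FreeGroup.lift_apply_of]; rfl]
    rw [hom_fix_K _ (lift_fL_inl c⁻¹) c hc]
    group

theorem compR {c : FreeGroup (U ⊕ Unit)} (hc : c ∈ KK U) :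
    (FreeGroup.lift (fR c⁻¹)).comp (FreeGroup.lift (fR c)) = MonoidHom.id _ := by
  apply FreeGroup.ext_hom
  intro x
  cases x with
  | inl y =>
    simp only [MonoidHom.comp_apply, MonoidHom.id_apply]
    rw [lift_fR_inl]
    exact lift_fR_inl c⁻¹ y
  | inr _ =>
    simp only [MonoidHom.comp_apply, MonoidHom.id_apply]
    rw [show FreeGroup.of (Sum.inr () : U ⊕ Unit) = vv from rfl]
    rw [show FreeGroup.lift (fR c) vv = vv * c from by rw [vv, FreeGroup.lift_apply_of]; rfl]
    rw [_root_.map_mul]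
    rw [show FreeGroup.lift (fR c⁻¹) vv = vv * c⁻¹ from by rw [vv, FreeGroup.lift_apply_of]; rfl]
    rw [hom_fix_K _ (lift_fR_inl c⁻¹) c hc]
    group

/-- the automorphism v ↦ c * v -/
def autL (c : FreeGroup (U ⊕ Unit)) (hc : c ∈ KK U) : MulAut (FreeGroup (U ⊕ Unit)) :=
  MonoidHom.toMulEquiv (FreeGroup.lift (fL c)) (FreeGroup.lift (fL c⁻¹))
    (compL hc) (by simpa using compL (inv_mem hc))

/-- the automorphism v ↦ v * c -/
def autR (c : FreeGroup (U ⊕ Unit)) (hc : c ∈ KK U) : MulAut (FreeGroup (U ⊕ Unit)) :=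
  MonoidHom.toMulEquiv (FreeGroup.lift (fR c)) (FreeGroup.lift (fR c⁻¹))
    (compR hc) (by simpa using compR (inv_mem hc))

theorem autL_apply (c : FreeGroup (U ⊕ Unit)) (hc : c ∈ KK U) (z : FreeGroup (U ⊕ Unit)) :
    autL c hc z = FreeGroup.lift (fL c) z := rfl

theorem autR_apply (c : FreeGroup (U ⊕ Unit)) (hc : c ∈ KK U) (z : FreeGroup (U ⊕ Unit)) :
    autR c hc z = FreeGroup.lift (fR c) z := rfl

theorem autL_apply_v (c : FreeGroup (U ⊕ Unit)) (hc : c ∈ KK U) :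
    autL c hc vv = c * vv := by rw [autL_apply, vv, FreeGroup.lift_apply_of]; rfl

theorem autR_apply_v (c : FreeGroup (U ⊕ Unit)) (hc : c ∈ KK U) :
    autR c hc vv = vv * c := by rw [autR_apply, vv, FreeGroup.lift_apply_of]; rfl

theorem autL_apply_inl (c : FreeGroup (U ⊕ Unit)) (hc : c ∈ KK U) (y : U) :
    autL c hc (FreeGroup.of (Sum.inl y)) = FreeGroup.of (Sum.inl y) := lift_fL_inl c y

theorem autR_apply_inl (c : FreeGroup (U ⊕ Unit)) (hc : c ∈ KK U) (y : U) :
    autR c hc (FreeGroup.of (Sum.inl y)) = FreeGroup.of (Sum.inl y) := lift_fR_inl c y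

theorem autL_fix_K (c : FreeGroup (U ⊕ Unit)) (hc : c ∈ KK U) {a : FreeGroup (U ⊕ Unit)}
    (ha : a ∈ KK U) : autL c hc a = a :=
  hom_fix_K _ (lift_fL_inl c) a ha

theorem autR_fix_K (c : FreeGroup (U ⊕ Unit)) (hc : c ∈ KK U) {a : FreeGroup (U ⊕ Unit)}
    (ha : a ∈ KK U) : autR c hc a = a :=
  hom_fix_K _ (lift_fR_inl c) a ha

theorem mulAut_ext {β : Type*} {f g : MulAut (FreeGroup β)}
    (h : ∀ x, f (FreeGroup.of x) = g (FreeGroup.of x)) : f = g := by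
  have : (f : FreeGroup β →* FreeGroup β) = (g : FreeGroup β →* FreeGroup β) :=
    FreeGroup.ext_hom _ _ (by simpa using h)
  exact MulEquiv.toMonoidHom_injective this

theorem autL_congr {c d : FreeGroup (U ⊕ Unit)} (hc : c ∈ KK U) (hd : d ∈ KK U)
    (h : c = d) : autL c hc = autL d hd := by subst h; rfl

theorem autR_congr {c d : FreeGroup (U ⊕ Unit)} (hc : c ∈ KK U) (hd : d ∈ KK U)
    (h : c = d) : autR c hc = autR d hd := by subst h; rfl

theorem autL_mul {c d : FreeGroup (U ⊕ Unit)} (hc : c ∈ KK U) (hd : d ∈ KK U) :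
    autL c hc * autL d hd = autL (d * c) (mul_mem hd hc) := by
  apply mulAut_ext
  intro x
  cases x with
  | inl y => rw [MulAut.mul_apply, autL_apply_inl, autL_apply_inl, autL_apply_inl]
  | inr i =>
    cases i
    rw [MulAut.mul_apply, show FreeGroup.of (Sum.inr () : U ⊕ Unit) = vv from rfl,
      autL_apply_v, _root_.map_mul, autL_apply_v, autL_fix_K c hc hd, autL_apply_v, mul_assoc]

theorem autR_mul {c d : FreeGroup (U ⊕ Unit)} (hc : c ∈ KK U) (hd : d ∈ KK U) :
    autR c hc * autR d hd = autR (c * d) (mul_mem hc hd) := by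
  apply mulAut_ext
  intro x
  cases x with
  | inl y => rw [MulAut.mul_apply, autR_apply_inl, autR_apply_inl, autR_apply_inl]
  | inr i =>
    cases i
    rw [MulAut.mul_apply, show FreeGroup.of (Sum.inr () : U ⊕ Unit) = vv from rfl,
      autR_apply_v, _root_.map_mul, autR_apply_v, autR_fix_K c hc hd, autR_apply_v, mul_assoc]

theorem autL_one : autL (1 : FreeGroup (U ⊕ Unit)) (one_mem _) = 1 := by
  apply mulAut_ext
  intro x
  cases x with
  | inl y => rw [autL_apply_inl]; rfl
  | inr i =>
    cases i
    rw [show FreeGroup.of (Sum.inr () : U ⊕ Unit) = vv from rfl, autL_apply_v, one_mul]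
    rfl

theorem autR_one : autR (1 : FreeGroup (U ⊕ Unit)) (one_mem _) = 1 := by
  apply mulAut_ext
  intro x
  cases x with
  | inl y => rw [autR_apply_inl]; rfl
  | inr i =>
    cases i
    rw [show FreeGroup.of (Sum.inr () : U ⊕ Unit) = vv from rfl, autR_apply_v, mul_one]
    rfl

theorem autL_pow {c : FreeGroup (U ⊕ Unit)} (hc : c ∈ KK U) (n : ℕ) :
    autL c hc ^ n = autL (c ^ n) (pow_mem hc n) := by
  induction n with
  | zero => rw [pow_zero, autL_congr (pow_mem hc 0) (one_mem _) (pow_zero c), autL_one]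
  | succ n ih =>
    rw [pow_succ, ih, autL_mul, autL_congr _ (pow_mem hc (n+1)) (pow_succ' c n).symm]

theorem autR_pow {c : FreeGroup (U ⊕ Unit)} (hc : c ∈ KK U) (n : ℕ) :
    autR c hc ^ n = autR (c ^ n) (pow_mem hc n) := by
  induction n with
  | zero => rw [pow_zero, autR_congr (pow_mem hc 0) (one_mem _) (pow_zero c), autR_one]
  | succ n ih =>
    rw [pow_succ, ih, autR_mul, autR_congr _ (pow_mem hc (n+1)) (pow_succ c n).symm]

theorem autL_inv {c : FreeGroup (U ⊕ Unit)} (hc : c ∈ KK U) :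
    (autL c hc)⁻¹ = autL c⁻¹ (inv_mem hc) := by
  symm
  apply eq_inv_of_mul_eq_one_right
  rw [autL_mul, autL_congr _ (one_mem _) (inv_mul_cancel c), autL_one]

theorem autR_inv {c : FreeGroup (U ⊕ Unit)} (hc : c ∈ KK U) :
    (autR c hc)⁻¹ = autR c⁻¹ (inv_mem hc) := by
  symm
  apply eq_inv_of_mul_eq_one_right
  rw [autR_mul, autR_congr _ (one_mem _) (mul_inv_cancel c), autR_one]

theorem autL_zpow {c : FreeGroup (U ⊕ Unit)} (hc : c ∈ KK U) (k : ℤ) :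
    autL c hc ^ k = autL (c ^ k) (zpow_mem hc k) := by
  cases k with
  | ofNat n =>
    rw [Int.ofNat_eq_coe, zpow_natCast, autL_pow]
    exact autL_congr _ _ (zpow_natCast c n).symm
  | negSucc n =>
    rw [zpow_negSucc, autL_pow, autL_inv]
    exact autL_congr _ _ (zpow_negSucc c n).symm

theorem autR_zpow {c : FreeGroup (U ⊕ Unit)} (hc : c ∈ KK U) (k : ℤ) :
    autR c hc ^ k = autR (c ^ k) (zpow_mem hc k) := by
  cases k with
  | ofNat n =>
    rw [Int.ofNat_eq_coe, zpow_natCast, autR_pow]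
    exact autR_congr _ _ (zpow_natCast c n).symm
  | negSucc n =>
    rw [zpow_negSucc, autR_pow, autR_inv]
    exact autR_congr _ _ (zpow_negSucc c n).symm



-- now new stuff

/-- the projection killing v -/
def ρ : FreeGroup (U ⊕ Unit) →* FreeGroup (U ⊕ Unit) :=
  FreeGroup.lift fun x => match x with
    | Sum.inl y => FreeGroup.of (Sum.inl y)
    | Sum.inr _ => 1

theorem ρ_inl (y : U) : ρ (FreeGroup.of (Sum.inl y)) = FreeGroup.of (Sum.inl y) :=
  FreeGroup.lift_apply_of

theorem ρ_v : ρ (vv : FreeGroup (U ⊕ Unit)) = 1 := FreeGroup.lift_apply_of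

/-- exponent-sum of the U-letters -/
def χ : FreeGroup (U ⊕ Unit) →* Multiplicative ℤ :=
  FreeGroup.lift fun x => match x with
    | Sum.inl _ => Multiplicative.ofAdd (1 : ℤ)
    | Sum.inr _ => 1

theorem χ_inl (y : U) : χ (FreeGroup.of (Sum.inl y)) = Multiplicative.ofAdd (1 : ℤ) :=
  FreeGroup.lift_apply_of

theorem χ_v : χ (vv : FreeGroup (U ⊕ Unit)) = 1 := FreeGroup.lift_apply_of

/-- sign-twisted permutation representation -/
def ψ : FreeGroup (U ⊕ Unit) →* Equiv.Perm ℤ :=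
  FreeGroup.lift fun x => match x with
    | Sum.inl _ => Equiv.addRight (1 : ℤ)
    | Sum.inr _ => Equiv.neg ℤ

theorem ψ_inl (y : U) : ψ (FreeGroup.of (Sum.inl y)) = Equiv.addRight (1 : ℤ) :=
  FreeGroup.lift_apply_of

theorem ψ_v : ψ (vv : FreeGroup (U ⊕ Unit)) = Equiv.neg ℤ := FreeGroup.lift_apply_of

theorem addRight_zpow (k : ℤ) : ∀ m : ℤ, ((Equiv.addRight (1 : ℤ)) ^ k) m = m + k := by
  induction k using Int.induction_on with
  | zero => intro m; simp
  | succ n ih =>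
    intro m
    rw [zpow_add_one, Equiv.Perm.mul_apply]
    rw [show (Equiv.addRight (1:ℤ)) m = m + 1 from rfl, ih]
    omega
  | pred n ih =>
    intro m
    rw [zpow_sub_one, Equiv.Perm.mul_apply]
    rw [show ((Equiv.addRight (1:ℤ))⁻¹ : Equiv.Perm ℤ) m = m - 1 from rfl, ih]
    omega

theorem fix_w {Sgen : Set (FreeGroup (U ⊕ Unit))} {w : FreeGroup (U ⊕ Unit)}
    (hw : w ∈ Subgroup.closure Sgen) (φ : MulAut (FreeGroup (U ⊕ Unit)))
    (hgen : ∀ s ∈ Sgen, φ s = s) : φ w = w := by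
  induction hw using Subgroup.closure_induction with
  | mem x hx => exact hgen x hx
  | one => exact map_one φ
  | mul x y hx hy ihx ihy => rw [_root_.map_mul, ihx, ihy]
  | inv x hx ihx => rw [_root_.map_inv, ihx]

variable [Nonempty U]

theorem main (u : FreeGroup (U ⊕ Unit))
    (hu : u ∈ Subgroup.closure (Set.range fun y : U => FreeGroup.of (Sum.inl y)))
    (w : FreeGroup (U ⊕ Unit))
    (hw : w ∈ Subgroup.closure
      ((Set.range fun y : U => FreeGroup.of (Sum.inl y)) ∪
        {(FreeGroup.of (Sum.inr ()))⁻¹ * u * FreeGroup.of (Sum.inr ())})) :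
    ¬ IsCyclic (MulAction.stabilizer (MulAut (FreeGroup (U ⊕ Unit))) w) := by
  classical
  intro hC
  set S := MulAction.stabilizer (MulAut (FreeGroup (U ⊕ Unit))) w with hSdef
  obtain ⟨g, hg⟩ := hC.exists_generator
  have huK : u ∈ KK U := hu
  have hvv : (FreeGroup.of (Sum.inr ()) : FreeGroup (U ⊕ Unit)) = vv := rfl
  by_cases hcheap : u = 1 ∨ w = 1
  · -- cheap case : use autL y and autR y
    set y₀ : U := Classical.arbitrary U
    have hyK : (FreeGroup.of (Sum.inl y₀) : FreeGroup (U ⊕ Unit)) ∈ KK U :=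
      Subgroup.subset_closure ⟨y₀, rfl⟩
    set y : FreeGroup (U ⊕ Unit) := FreeGroup.of (Sum.inl y₀) with hydef
    have hfix : ∀ (φ : MulAut (FreeGroup (U ⊕ Unit))),
        (∀ y' : U, φ (FreeGroup.of (Sum.inl y')) = FreeGroup.of (Sum.inl y')) → φ w = w := by
      intro φ hφ
      rcases hcheap with hu1 | hw1
      · refine fix_w hw φ ?_
        rintro s (⟨y', rfl⟩ | hs)
        · exact hφ y'
        · rcases hs with rfl
          have h1 : (FreeGroup.of (Sum.inr ()) : FreeGroup (U ⊕ Unit))⁻¹ * u *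
              FreeGroup.of (Sum.inr ()) = 1 := by rw [hu1]; group
          rw [h1]
          exact _root_.map_one φ
      · rw [hw1]
        exact _root_.map_one φ
    have hA : autL y hyK ∈ S := by
      rw [hSdef, MulAction.mem_stabilizer_iff]
      exact hfix _ (autL_apply_inl y hyK)
    have hB : autR y hyK ∈ S := by
      rw [hSdef, MulAction.mem_stabilizer_iff]
      exact hfix _ (autR_apply_inl y hyK)
    obtain ⟨a, ha⟩ := Subgroup.mem_zpowers_iff.mp (hg ⟨autL y hyK, hA⟩)
    obtain ⟨b, hb⟩ := Subgroup.mem_zpowers_iff.mp (hg ⟨autR y hyK, hB⟩)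
    have hAB : (⟨autL y hyK, hA⟩ : S) ^ b = (⟨autR y hyK, hB⟩ : S) ^ a := by
      rw [← ha, ← hb, ← zpow_mul, ← zpow_mul, mul_comm]
    have hAB' : (autL y hyK) ^ b = (autR y hyK) ^ a := by
      have h2 := congrArg (fun z : S => (z : MulAut (FreeGroup (U ⊕ Unit)))) hAB
      simpa using h2
    have heq : y ^ b * vv = vv * y ^ a := by
      have h3 := congrArg (fun φ : MulAut (FreeGroup (U ⊕ Unit)) => φ vv) hAB'
      rw [autL_zpow hyK b, autR_zpow hyK a, autL_apply_v, autR_apply_v] at h3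
      exact h3
    -- χ gives b = a
    have hba : b = a := by
      have h4 := congrArg χ heq
      rw [_root_.map_mul, _root_.map_mul, map_zpow, map_zpow, χ_v, hydef, χ_inl,
        mul_one, one_mul] at h4
      have h5 := congrArg Multiplicative.toAdd h4
      simpa using h5
    -- ψ gives b = -a
    have hbna : b = -a := by
      have h4 := congrArg ψ heq
      rw [_root_.map_mul, _root_.map_mul, map_zpow, map_zpow, ψ_v, hydef, ψ_inl] at h4
      have h5 := congrArg (fun e : Equiv.Perm ℤ => e 0) h4
      simp only [Equiv.Perm.mul_apply] at h5
      rw [show (Equiv.neg ℤ) (0:ℤ) = 0 from rfl, addRight_zpow] at h5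
      rw [addRight_zpow] at h5
      rw [show (Equiv.neg ℤ) ((0:ℤ) + a) = -(0 + a) from rfl] at h5
      omega
    have ha0 : a = 0 := by omega
    have hb0 : b = 0 := by omega
    rw [ha0] at ha
    have hA1 : autL y hyK = 1 := by
      have := congrArg (fun z : S => (z : MulAut (FreeGroup (U ⊕ Unit)))) ha
      simpa using this.symm
    have : y * vv = vv := by
      have h6 := congrArg (fun φ : MulAut (FreeGroup (U ⊕ Unit)) => φ vv) hA1
      rw [autL_apply_v] at h6
      simpa using h6
    have hy1 : y = 1 := mul_eq_right.mp this
    exact FreeGroup.of_ne_one _ hy1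
  · push_neg at hcheap
    obtain ⟨hu1, hw1⟩ := hcheap
    -- hard case : use autL u and conj w
    have hA : autL u huK ∈ S := by
      rw [hSdef, MulAction.mem_stabilizer_iff]
      refine fix_w hw _ ?_
      rintro s (⟨y', rfl⟩ | hs)
      · exact autL_apply_inl u huK y'
      · rcases hs with rfl
        rw [hvv, _root_.map_mul, _root_.map_mul, _root_.map_inv, autL_apply_v,
          autL_fix_K u huK huK]
        group
    have hB : MulAut.conj w ∈ S := by
      rw [hSdef, MulAction.mem_stabilizer_iff]
      show MulAut.conj w w = w
      rw [MulAut.conj_apply]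
      group
    obtain ⟨a, ha⟩ := Subgroup.mem_zpowers_iff.mp (hg ⟨autL u huK, hA⟩)
    obtain ⟨b, hb⟩ := Subgroup.mem_zpowers_iff.mp (hg ⟨MulAut.conj w, hB⟩)
    have hAB : (⟨autL u huK, hA⟩ : S) ^ b = (⟨MulAut.conj w, hB⟩ : S) ^ a := by
      rw [← ha, ← hb, ← zpow_mul, ← zpow_mul, mul_comm]
    have hAB' : (autL u huK) ^ b = (MulAut.conj w) ^ a := by
      have h2 := congrArg (fun z : S => (z : MulAut (FreeGroup (U ⊕ Unit)))) hAB
      simpa using h2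
    have hconjzpow : (MulAut.conj w) ^ a = MulAut.conj (w ^ a) := (map_zpow MulAut.conj w a).symm
    have heq : u ^ b * vv = w ^ a * vv * (w ^ a)⁻¹ := by
      have h3 := congrArg (fun φ : MulAut (FreeGroup (U ⊕ Unit)) => φ vv) hAB'
      rw [autL_zpow huK b, autL_apply_v, hconjzpow, MulAut.conj_apply] at h3
      exact h3
    have hub : u ^ b = 1 := by
      have h4 := congrArg ρ heq
      rw [_root_.map_mul, _root_.map_mul, _root_.map_mul, _root_.map_inv, ρ_v,
        map_zpow] at h4
      rw [hom_fix_K ρ ρ_inl u huK] at h4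
      rw [map_zpow] at h4
      group at h4
      simpa using h4
    have hb0 : b = 0 := freeGroup_zpow_eq_one hu1 hub
    rw [hb0] at hb
    have hconj1 : MulAut.conj w = (1 : MulAut (FreeGroup (U ⊕ Unit))) := by
      have := congrArg (fun z : S => (z : MulAut (FreeGroup (U ⊕ Unit)))) hb
      simpa using this.symm
    have hcent : ∀ z : FreeGroup (U ⊕ Unit), w * z = z * w := by
      intro z
      have h5 := congrArg (fun φ : MulAut (FreeGroup (U ⊕ Unit)) => φ z) hconj1
      simp only [MulAut.conj_apply, MulAut.one_apply] at h5
      calc w * z = (w * z * w⁻¹) * w := by group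
      _ = z * w := by rw [h5]
    have hwone : w = 1 := by
      set y₀ : U := Classical.arbitrary U
      exact eq_one_of_commute_two (Sum.inl_ne_inr (b := ()) (a := y₀))
        (hcent (FreeGroup.of (Sum.inl y₀))) (hcent (FreeGroup.of (Sum.inr ())))
    exact hw1 hwone


end Main

end Stmt2Aux

/-- Let U be a nonempty finite set, let F = F(U ⊔ {v}) be the free group with
free basis U ⊔ {v}, and let u ∈ ⟨U⟩. If an element w ∈ F lies in the subgroup
⟨U ∪ {v⁻¹uv}⟩, then the stabilizer of w in Aut(F) is not a cyclic group.
Here the extra basis element v is modeled as `Sum.inr ()` in `U ⊕ Unit`. -/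
theorem statement2 {U : Type} [Finite U] [Nonempty U]
    (u : FreeGroup (U ⊕ Unit))
    (hu : u ∈ Subgroup.closure (Set.range fun y : U => FreeGroup.of (Sum.inl y)))
    (w : FreeGroup (U ⊕ Unit))
    (hw : w ∈ Subgroup.closure
      ((Set.range fun y : U => FreeGroup.of (Sum.inl y)) ∪
        {(FreeGroup.of (Sum.inr ()))⁻¹ * u * FreeGroup.of (Sum.inr ())})) :
    ¬ IsCyclic (MulAction.stabilizer (MulAut (FreeGroup (U ⊕ Unit))) w) := by
  exact Stmt2Aux.main u hu w hw
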